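/- Let f₁, …, f_N : ℝⁿ → ℝ be continuously differentiable, fix β ∈ (−1, 1), γ ∈ ℝ, δ > 0, let r > 0, and let X₀, X₁ ⊆ B(0, r/2) be compact sets, where B(0, s) is the closed ball of radius s centered at the origin. Then there exist T > 0 and ᾱ ∈ (0, T/2] such that for every α ∈ (0, ᾱ], every k̄ ∈ ℕ, and every random-reshuffling-with-momentum trajectory of f₁, …, f_N with step size α and parameters β, γ, δ whose outer iterates satisfy x₀, …, x_{k̄} ∈ X₁ and x_{k̄} ∈ X₀, one has x_{k,i} ∈ B(0, r) for all k ∈ {k̄, …, k̄ + ⌊T/α⌋} and i ∈ {0, …, N}, and y_{k,i} ∈ B(0, r) for all such k and i ∈ {1, …, N}. (Intermediate claim established in the proof of the paper's Proposition 4.1, in the continuously differentiable case.) -/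

import Mathlib

lemma tel_aux {E : Type*} [NormedAddCommGroup E] (x : ℤ → E) (c : ℝ) :
    ∀ i : ℕ, (∀ m : ℕ, m < i → ‖x ((m : ℤ) + 1) - x (m : ℤ)‖ ≤ c) →
      ‖x (i : ℤ) - x 0‖ ≤ i * c := by
  intro i
  induction i with
  | zero => simp
  | succ i ih =>
    intro h
    have h1 := h i (by omega)
    have h2 := ih (fun m hm => h m (by omega))
    have e : x ((i + 1 : ℕ) : ℤ) - x 0 = (x ((i:ℤ) + 1) - x (i:ℤ)) + (x (i:ℤ) - x 0) := by
      push_cast; abel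
    have := norm_add_le (x ((i:ℤ) + 1) - x (i:ℤ)) (x (i:ℤ) - x 0)
    rw [e]
    push_cast
    nlinarith [norm_nonneg (x ((i:ℤ)+1) - x (i:ℤ))]

def IsRRMTraj {n N : ℕ} (f : Fin N → EuclideanSpace ℝ (Fin n) → ℝ) (α β γ δ : ℝ)
    (x : ℕ → ℤ → EuclideanSpace ℝ (Fin n)) : Prop :=
  ‖x 0 (-1) - x 0 0‖ ≤ δ * α ∧
  (∀ k : ℕ, x (k + 1) (-1) = x k ((N : ℤ) - 1)) ∧
  (∀ k : ℕ, x (k + 1) 0 = x k (N : ℤ)) ∧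
  (∀ k : ℕ, ∃ σ : Equiv.Perm (Fin N), ∀ i : Fin N,
    x k (((i : ℕ) : ℤ) + 1)
      = x k ((i : ℕ) : ℤ) + β • (x k ((i : ℕ) : ℤ) - x k (((i : ℕ) : ℤ) - 1))
        - α • gradient (f (σ i))
            (x k ((i : ℕ) : ℤ) + γ • (x k ((i : ℕ) : ℤ) - x k (((i : ℕ) : ℤ) - 1))))

set_option maxHeartbeats 1000000 in
theorem stmt_10 {n N : ℕ} (hN : 1 ≤ N) (f : Fin N → EuclideanSpace ℝ (Fin n) → ℝ)
    (hf : ∀ i, ContDiff ℝ 1 (f i))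
    (β γ δ : ℝ) (hβ : β ∈ Set.Ioo (-1 : ℝ) 1) (hδ : 0 < δ)
    (r : ℝ) (hr : 0 < r)
    (X₀ X₁ : Set (EuclideanSpace ℝ (Fin n))) (hX₀ : IsCompact X₀) (hX₁ : IsCompact X₁)
    (hX₀b : X₀ ⊆ Metric.closedBall 0 (r / 2)) (hX₁b : X₁ ⊆ Metric.closedBall 0 (r / 2)) :
    ∃ T ᾱ : ℝ, 0 < T ∧ 0 < ᾱ ∧ ᾱ ≤ T / 2 ∧
      ∀ α : ℝ, 0 < α → α ≤ ᾱ → ∀ kbar : ℕ,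
        ∀ x : ℕ → ℤ → EuclideanSpace ℝ (Fin n), IsRRMTraj f α β γ δ x →
          (∀ k : ℕ, k ≤ kbar → x k 0 ∈ X₁) → x kbar 0 ∈ X₀ →
          ∀ k : ℕ, kbar ≤ k → k ≤ kbar + ⌊T / α⌋₊ →
            (∀ i : ℤ, 0 ≤ i → i ≤ (N : ℤ) → x k i ∈ Metric.closedBall (0 : EuclideanSpace ℝ (Fin n)) r) ∧
            (∀ i : Fin N,
              x k ((i : ℕ) : ℤ) + γ • (x k ((i : ℕ) : ℤ) - x k (((i : ℕ) : ℤ) - 1))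
                ∈ Metric.closedBall (0 : EuclideanSpace ℝ (Fin n)) r) := by
  have hβ1 : |β| < 1 := abs_lt.mpr ⟨hβ.1, hβ.2⟩
  have h1β : 0 < 1 - |β| := by linarith
  -- gradient bound on B(0, 2r)
  have hgc : ∀ i, Continuous (gradient (f i)) := by
    intro i
    have h1 : Continuous (fderiv ℝ (f i)) := (hf i).continuous_fderiv one_ne_zero
    exact ((InnerProductSpace.toDual ℝ _).symm.continuous).comp h1
  have hMi : ∀ i : Fin N, ∃ Mi : ℝ, ∀ z ∈ Metric.closedBall (0 : EuclideanSpace ℝ (Fin n)) (2*r),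
      ‖gradient (f i) z‖ ≤ Mi := fun i =>
    (isCompact_closedBall _ _).exists_bound_of_continuousOn (hgc i).continuousOn
  choose Mi hMi using hMi
  haveI : Nonempty (Fin N) := Fin.pos_iff_nonempty.mp hN
  set M : ℝ := max 0 (Finset.univ.sup' Finset.univ_nonempty Mi) with hMdef
  have hM0 : (0:ℝ) ≤ M := le_max_left _ _
  have hMb : ∀ (i : Fin N) (z : EuclideanSpace ℝ (Fin n)), ‖z‖ ≤ 2*r → ‖gradient (f i) z‖ ≤ M := by
    intro i z hz
    refine le_trans (hMi i z (by simpa [Metric.mem_closedBall, dist_zero_right] using hz)) ?_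
    exact le_trans (Finset.le_sup' Mi (Finset.mem_univ i)) (le_max_right _ _)
  set C : ℝ := max δ (M / (1 - |β|)) with hCdef
  have hC0 : 0 < C := lt_of_lt_of_le hδ (le_max_left _ _)
  have hCrec : |β| * C + M ≤ C := by
    have h2 : M / (1 - |β|) ≤ C := le_max_right _ _
    rw [div_le_iff₀ h1β] at h2
    nlinarith [abs_nonneg β]
  have hNpos : (0:ℝ) < N := by exact_mod_cast hN
  refine ⟨r / (8 * N * C), min (r / (8 * N * C) / 2) (r / (8 * (N + |γ| + 1) * C)),
    div_pos hr (by positivity), lt_min (by positivity) (div_pos hr (by positivity)),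
    min_le_left _ _, ?_⟩
  set T : ℝ := r / (8 * N * C) with hTdef
  have hT : 0 < T := div_pos hr (by positivity)
  have hTNC : T * ((N:ℝ) * C) = r / 8 := by
    rw [hTdef]; field_simp
  intro α hα hαA kbar x hx hX1 hX0
  obtain ⟨hx0, hx1, hx2, hx3⟩ := hx
  have hαA2 : α ≤ r / (8 * (N + |γ| + 1) * C) := le_trans hαA (min_le_right _ _)
  have hαNC : (N:ℝ) * (α * C) ≤ r/8 := by
    rw [le_div_iff₀ (by positivity)] at hαA2
    nlinarith [abs_nonneg γ, hα.le, hC0.le]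
  have hαγC : |γ| * (α * C) ≤ r/8 := by
    rw [le_div_iff₀ (by positivity)] at hαA2
    nlinarith [abs_nonneg γ, hα.le, hC0.le]
  have hFloor : (⌊T/α⌋₊ : ℝ) * ((N:ℝ) * (α * C)) ≤ r/8 := by
    have h1 : (⌊T/α⌋₊ : ℝ) ≤ T/α := Nat.floor_le (by positivity)
    have h2 : (⌊T/α⌋₊ : ℝ) * ((N:ℝ) * (α * C)) ≤ (T/α) * ((N:ℝ) * (α * C)) :=
      mul_le_mul_of_nonneg_right h1 (by positivity)
    have h3 : (T/α) * ((N:ℝ) * (α * C)) = T * ((N:ℝ) * C) := by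
      field_simp
    rw [h3] at h2
    linarith [hTNC ▸ h2]
  -- one-block increment bounds
  have step : ∀ k : ℕ, ‖x k 0 - x k (-1)‖ ≤ α * C → ‖x k 0‖ ≤ r/2 + r/8 →
      ∀ j : ℕ, j ≤ N → ‖x k (j:ℤ) - x k ((j:ℤ) - 1)‖ ≤ α * C := by
    intro k hD0 hpos j
    induction j using Nat.strong_induction_on with
    | _ j ihj =>
      intro hjN
      match j with
      | 0 => simpa using hD0
      | (m+1) =>
        obtain ⟨σ, hσ⟩ := hx3 k
        have hmN : m < N := by omega
        have heq := hσ ⟨m, hmN⟩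
        simp only [Fin.val_mk] at heq
        have htel : ‖x k (m:ℤ) - x k 0‖ ≤ (m:ℝ) * (α*C) := by
          apply tel_aux (x k) _ m
          intro p hp
          have h4 := ihj (p+1) (by omega) (by omega)
          rw [show ((p+1:ℕ):ℤ) = (p:ℤ)+1 by push_cast; ring] at h4
          rw [show ((p:ℤ)+1)-1 = (p:ℤ) by ring] at h4
          exact h4
        have hxm : ‖x k (m:ℤ)‖ ≤ r/2 + r/8 + r/8 := by
          have h5 : (m:ℝ) * (α*C) ≤ (N:ℝ) * (α*C) := by
            apply mul_le_mul_of_nonneg_right _ (by positivity)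
            exact_mod_cast hmN.le
          have h6 := norm_sub_norm_le (x k (m:ℤ)) (x k 0)
          linarith [norm_le_insert' (x k (m:ℤ)) (x k 0)]
        have hDm : ‖x k (m:ℤ) - x k ((m:ℤ)-1)‖ ≤ α*C := ihj m (by omega) (by omega)
        have hy : ‖x k (m:ℤ) + γ • (x k (m:ℤ) - x k ((m:ℤ)-1))‖ ≤ 2*r := by
          have h7 := norm_add_le (x k (m:ℤ)) (γ • (x k (m:ℤ) - x k ((m:ℤ)-1)))
          rw [norm_smul, Real.norm_eq_abs] at h7
          have h8 : |γ| * ‖x k (m:ℤ) - x k ((m:ℤ)-1)‖ ≤ |γ| * (α*C) :=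
            mul_le_mul_of_nonneg_left hDm (abs_nonneg γ)
          linarith
        have hg := hMb (σ ⟨m, hmN⟩) _ hy
        have e2 : x k ((m+1:ℕ):ℤ) - x k (((m+1:ℕ):ℤ)-1)
            = β • (x k (m:ℤ) - x k ((m:ℤ)-1))
              - α • gradient (f (σ ⟨m, hmN⟩)) (x k (m:ℤ) + γ • (x k (m:ℤ) - x k ((m:ℤ)-1))) := by
          have e3 : ((m+1:ℕ):ℤ) = (m:ℤ)+1 := by push_cast; ring
          rw [e3, heq]
          have e4 : (m:ℤ)+1-1 = (m:ℤ) := by ring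
          rw [e4]
          abel
        rw [e2]
        have h9 := norm_sub_le (β • (x k (m:ℤ) - x k ((m:ℤ)-1)))
          (α • gradient (f (σ ⟨m, hmN⟩)) (x k (m:ℤ) + γ • (x k (m:ℤ) - x k ((m:ℤ)-1))))
        rw [norm_smul, norm_smul, Real.norm_eq_abs, Real.norm_eq_abs, abs_of_pos hα] at h9
        have h10 : |β| * ‖x k (m:ℤ) - x k ((m:ℤ)-1)‖ ≤ |β| * (α*C) :=
          mul_le_mul_of_nonneg_left hDm (abs_nonneg β)
        have h11 : α * ‖gradient (f (σ ⟨m, hmN⟩)) (x k (m:ℤ) + γ • (x k (m:ℤ) - x k ((m:ℤ)-1)))‖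
            ≤ α * M := mul_le_mul_of_nonneg_left hg hα.le
        have h12 : α * (C * |β| + M) ≤ α * C := mul_le_mul_of_nonneg_left (by linarith) hα.le
        linarith
  -- main induction
  have key : ∀ k : ℕ, k ≤ kbar + ⌊T/α⌋₊ →
      ‖x k 0‖ ≤ r/2 + ((k - kbar : ℕ):ℝ) * ((N:ℝ) * (α*C)) ∧
      (∀ j : ℕ, j ≤ N → ‖x k (j:ℤ) - x k ((j:ℤ)-1)‖ ≤ α*C) := by
    intro k
    induction k with
    | zero =>
      intro _
      have hpos0 : ‖x 0 0‖ ≤ r/2 :=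
        mem_closedBall_zero_iff.mp (hX₁b (hX1 0 (Nat.zero_le _)))
      have hD0 : ‖x 0 0 - x 0 (-1)‖ ≤ α*C := by
        rw [norm_sub_rev]
        calc ‖x 0 (-1) - x 0 0‖ ≤ δ * α := hx0
          _ ≤ α * C := by
            have : δ ≤ C := le_max_left _ _
            nlinarith
      refine ⟨?_, step 0 hD0 (by linarith)⟩
      have h0 : (0:ℝ) ≤ ((0 - kbar : ℕ):ℝ) * ((N:ℝ) * (α*C)) := by positivity
      linarith
    | succ k ih =>
      intro hk
      have ihk := ih (by omega)
      have hD0 : ‖x (k+1) 0 - x (k+1) (-1)‖ ≤ α*C := by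
        rw [hx2 k, hx1 k]
        have h12 := ihk.2 N le_rfl
        exact h12
      have hposk : ‖x k 0‖ ≤ r/2 + r/8 := by
        have h13 : ((k - kbar : ℕ):ℝ) ≤ (⌊T/α⌋₊:ℝ) := by
          exact_mod_cast Nat.sub_le_iff_le_add.mpr (by omega)
        have h14 : ((k - kbar : ℕ):ℝ) * ((N:ℝ) * (α*C)) ≤ (⌊T/α⌋₊:ℝ) * ((N:ℝ) * (α*C)) :=
          mul_le_mul_of_nonneg_right h13 (by positivity)
        linarith [ihk.1]
      have hpos : ‖x (k+1) 0‖ ≤ r/2 + ((k+1 - kbar : ℕ):ℝ) * ((N:ℝ) * (α*C)) := by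
        by_cases hks : k+1 ≤ kbar
        · have h15 : ‖x (k+1) 0‖ ≤ r/2 :=
            mem_closedBall_zero_iff.mp (hX₁b (hX1 (k+1) hks))
          have : (0:ℝ) ≤ ((k+1 - kbar : ℕ):ℝ) * ((N:ℝ) * (α*C)) := by positivity
          linarith
        · have h1 : x (k+1) 0 = x k (N:ℤ) := hx2 k
          have htel : ‖x k ((N:ℕ):ℤ) - x k 0‖ ≤ (N:ℝ) * (α*C) := by
            apply tel_aux (x k) _ N
            intro p hp
            have h4 := ihk.2 (p+1) (by omega)
            rw [show ((p+1:ℕ):ℤ) = (p:ℤ)+1 by push_cast; ring] at h4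
            rw [show ((p:ℤ)+1)-1 = (p:ℤ) by ring] at h4
            exact h4
          have h16 : ((k+1 - kbar : ℕ):ℝ) = ((k - kbar : ℕ):ℝ) + 1 := by
            have : kbar ≤ k := by omega
            push_cast [Nat.succ_sub this]
            ring
          rw [h1, h16]
          have h17 := norm_le_insert' (x k ((N:ℕ):ℤ)) (x k 0)
          have := ihk.1
          linarith
      have hposb : ‖x (k+1) 0‖ ≤ r/2 + r/8 := by
        have h13 : ((k+1 - kbar : ℕ):ℝ) ≤ (⌊T/α⌋₊:ℝ) := by
          exact_mod_cast Nat.sub_le_iff_le_add.mpr (by omega)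
        have h14 : ((k+1 - kbar : ℕ):ℝ) * ((N:ℝ) * (α*C)) ≤ (⌊T/α⌋₊:ℝ) * ((N:ℝ) * (α*C)) :=
          mul_le_mul_of_nonneg_right h13 (by positivity)
        linarith
      exact ⟨hpos, step (k+1) hD0 hposb⟩
  -- conclude
  intro k hk1 hk2
  obtain ⟨hpos, hinc⟩ := key k hk2
  have hposb : ‖x k 0‖ ≤ r/2 + r/8 := by
    have h13 : ((k - kbar : ℕ):ℝ) ≤ (⌊T/α⌋₊:ℝ) := by
      exact_mod_cast Nat.sub_le_iff_le_add.mpr (by omega)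
    have h14 : ((k - kbar : ℕ):ℝ) * ((N:ℝ) * (α*C)) ≤ (⌊T/α⌋₊:ℝ) * ((N:ℝ) * (α*C)) :=
      mul_le_mul_of_nonneg_right h13 (by positivity)
    linarith
  have hxk : ∀ j : ℕ, j ≤ N → ‖x k (j:ℤ)‖ ≤ r/2 + r/8 + r/8 := by
    intro j hj
    have htel : ‖x k (j:ℤ) - x k 0‖ ≤ (j:ℝ) * (α*C) := by
      apply tel_aux (x k) _ j
      intro p hp
      have h4 := hinc (p+1) (by omega)
      rw [show ((p+1:ℕ):ℤ) = (p:ℤ)+1 by push_cast; ring] at h4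
      rw [show ((p:ℤ)+1)-1 = (p:ℤ) by ring] at h4
      exact h4
    have h5 : (j:ℝ) * (α*C) ≤ (N:ℝ) * (α*C) := by
      apply mul_le_mul_of_nonneg_right _ (by positivity)
      exact_mod_cast hj
    have h17 := norm_le_insert' (x k (j:ℤ)) (x k 0)
    linarith
  constructor
  · intro i hi0 hiN
    lift i to ℕ using hi0
    rw [mem_closedBall_zero_iff]
    have := hxk i (by exact_mod_cast hiN)
    linarith
  · intro i
    rw [mem_closedBall_zero_iff]
    have h18 := hxk i (le_of_lt i.isLt)
    have hDm := hinc i (le_of_lt i.isLt)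
    have h7 := norm_add_le (x k ((i:ℕ):ℤ)) (γ • (x k ((i:ℕ):ℤ) - x k (((i:ℕ):ℤ)-1)))
    rw [norm_smul, Real.norm_eq_abs] at h7
    have h8 : |γ| * ‖x k ((i:ℕ):ℤ) - x k (((i:ℕ):ℤ)-1)‖ ≤ |γ| * (α*C) :=
      mul_le_mul_of_nonneg_left hDm (abs_nonneg γ)
    linarith
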